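/- Nonsingularity of the transition matrix between Euler systems (combinatorial form of the first assertion of Corollary 5): let G be a simple graph on a finite vertex set V and v₁, …, v_k a finite sequence of vertices. Define G₀ = G and G_i = (G_{i-1})^{v_i} for 1 ≤ i ≤ k; let φ̄ be the constant transition function with value φ, and define s₀ = φ̄, s_i = (s_{i-1})^{G_{i-1}, v_i} for 1 ≤ i ≤ k. Then the matrix M(G_k, s_k) is invertible over GF(2). -/

import Mathlib

open scoped Classical

/-- The three transitions at a vertex, labeled relative to an Euler system. -/
inductive Transition : Type
  | phi | chi | psi
  deriving DecidableEq

variable {V : Type*} [Fintype V] [DecidableEq V]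

/-- Simple local complement `G^v`: toggle adjacency between distinct neighbors of `v`. -/
def localComp (G : SimpleGraph V) (v : V) : SimpleGraph V where
  Adj u w := u ≠ w ∧ Xor' (G.Adj u w) (G.Adj v u ∧ G.Adj v w)
  symm := ⟨by
    rintro u w ⟨hne, hx⟩
    refine ⟨hne.symm, ?_⟩
    rw [G.adj_comm w u, and_comm]
    exact hx⟩
  loopless := ⟨by rintro u ⟨hne, _⟩; exact hne rfl⟩

/-- Modified interlacement matrix `M(G, t)` over GF(2). -/
noncomputable def Mmat (G : SimpleGraph V) (t : V → Transition) : Matrix V V (ZMod 2) :=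
  Matrix.of fun w u =>
    if w = u then (if t u = Transition.chi then 0 else 1)
    else if t u = Transition.phi then 0
    else if G.Adj w u then 1 else 0

/-- Updated transition function `t^{G,v}`. -/
noncomputable def updT (G : SimpleGraph V) (v : V) (t : V → Transition) : V → Transition :=
  fun u =>
    if u = v then
      match t u with
      | Transition.phi => Transition.psi
      | Transition.psi => Transition.phi
      | Transition.chi => Transition.chi
    else if G.Adj v u then
      match t u with
      | Transition.chi => Transition.psi
      | Transition.psi => Transition.chi
      | Transition.phi => Transition.phi
    else t u

/-- Modified local complement of a matrix, taken with respect to `G` at `v`: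
add row `v` to the row of every neighbor of `v` in `G`. -/
noncomputable def modLC (G : SimpleGraph V) (v : V) (M : Matrix V V (ZMod 2)) :
    Matrix V V (ZMod 2) :=
  Matrix.of fun w u => if G.Adj v w then M w u + M v u else M w u

/-- One κ-step at `v` applied to a graph together with a transition function:
`(G, s) ↦ (G^v, s^{G,v})`. -/
noncomputable def stepGT (v : V) (p : SimpleGraph V × (V → Transition)) :
    SimpleGraph V × (V → Transition) :=
  (localComp p.1 v, updT p.1 v p.2)

lemma localComp_adj (G : SimpleGraph V) (v u w : V) :
    (localComp G v).Adj u w ↔ u ≠ w ∧ Xor' (G.Adj u w) (G.Adj v u ∧ G.Adj v w) := Iff.rfl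

set_option maxHeartbeats 1600000 in
lemma key (G : SimpleGraph V) (v : V) (t : V → Transition) :
    Mmat (localComp G v) (updT G v t) = modLC G v (Mmat G t) := by
  ext w u
  rcases htu : t u with _ | _ | _ <;>
    simp only [Mmat, updT, modLC, Matrix.of_apply, localComp_adj, htu] <;>
    by_cases hwu : w = u <;> by_cases huv : u = v <;> by_cases hwv : w = v <;>
    by_cases h1 : G.Adj v u <;> by_cases h2 : G.Adj v w <;> by_cases h3 : G.Adj w u <;>
    simp_all [Xor', G.loopless, G.adj_comm, ne_comm] <;> first | decide | (split_ifs <;> first | decide | simp_all)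

noncomputable def Qmat (G : SimpleGraph V) (v : V) : Matrix V V (ZMod 2) :=
  Matrix.of fun w u => if G.Adj v w ∧ u = v then 1 else 0

lemma Qmat_mul (G : SimpleGraph V) (v : V) (M : Matrix V V (ZMod 2)) (w u : V) :
    (Qmat G v * M) w u = if G.Adj v w then M v u else 0 := by
  rw [Matrix.mul_apply, Finset.sum_eq_single v]
  · simp [Qmat]
  · intro b _ hb; simp [Qmat, hb]
  · simp

lemma modLC_eq (G : SimpleGraph V) (v : V) (M : Matrix V V (ZMod 2)) :
    modLC G v M = (1 + Qmat G v) * M := by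
  ext w u
  rw [Matrix.add_mul, Matrix.one_mul, Matrix.add_apply, Qmat_mul]
  simp only [modLC, Matrix.of_apply]
  split <;> simp

lemma Pmat_sq (G : SimpleGraph V) (v : V) :
    (1 + Qmat G v) * (1 + Qmat G v) = 1 := by
  have hQQ : Qmat G v * Qmat G v = 0 := by
    ext w u
    rw [Qmat_mul]
    simp [Qmat, G.loopless.irrefl v]
  have h2 : Qmat G v + Qmat G v = 0 := by
    ext w u
    simp only [Qmat, Matrix.add_apply, Matrix.zero_apply, Matrix.of_apply]
    split <;> decide
  rw [Matrix.add_mul, Matrix.mul_add, Matrix.mul_add, Matrix.one_mul, Matrix.mul_one, hQQ,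
    Matrix.one_mul, add_zero, add_assoc, h2, add_zero]

lemma isUnit_modLC (G : SimpleGraph V) (v : V) (M : Matrix V V (ZMod 2)) (h : IsUnit M) :
    IsUnit (modLC G v M) := by
  rw [modLC_eq]
  have hP : IsUnit (1 + Qmat G v) :=
    ⟨⟨1 + Qmat G v, 1 + Qmat G v, Pmat_sq G v, Pmat_sq G v⟩, rfl⟩
  exact hP.mul h

lemma Mmat_phi (G : SimpleGraph V) : Mmat G (fun _ => Transition.phi) = 1 := by
  ext w u
  simp only [Mmat, Matrix.of_apply, Matrix.one_apply]
  split <;> simp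

/-- first assertion of Corollary 5: with `G₀ = G`, `s₀ = φ̄` (the constant
`φ` transition), `G_i = G_{i-1}^{v_i}` and `s_i = s_{i-1}^{G_{i-1},v_i}`, the matrix
`M(G_k, s_k)` is invertible over GF(2). -/
theorem Mmat_transition_isUnit (G : SimpleGraph V) (vs : List V) :
    let p := vs.foldl (fun q v => stepGT v q) (G, fun _ => Transition.phi)
    IsUnit (Mmat p.1 p.2) := by
  intro p
  have main : ∀ (q : SimpleGraph V × (V → Transition)), IsUnit (Mmat q.1 q.2) →
      IsUnit (Mmat (vs.foldl (fun q v => stepGT v q) q).1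
        (vs.foldl (fun q v => stepGT v q) q).2) := by
    induction vs with
    | nil => intro q h; exact h
    | cons v vs ih =>
      intro q h
      simp only [List.foldl_cons]
      apply ih
      have : Mmat (stepGT v q).1 (stepGT v q).2 = modLC q.1 v (Mmat q.1 q.2) :=
        key q.1 v q.2
      rw [this]
      exact isUnit_modLC _ _ _ h
  apply main
  rw [Mmat_phi]
  exact isUnit_one
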